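/- Let ρ: W → GL(V) be an n-dimensional representation of a group W, and let s₁, …, s_k ∈ W be such that each s_i acts on V as a generalized reflection with reflection vector α_i of eigenvalue λ_i. Suppose α₁, …, α_k are linearly independent, and extend them to a basis {α₁, …, α_k, α_{k+1}, …, α_n} of V. Then for every k ≤ d ≤ n, the intersection ⋂_{1 ≤ i ≤ k} V_{d,s_i}^− has basis {α₁ ∧ ⋯ ∧ α_k ∧ α_{j_{k+1}} ∧ ⋯ ∧ α_{j_d} : k+1 ≤ j_{k+1} < ⋯ < j_d ≤ n}. In particular, for d = k, the intersection ⋂_{1 ≤ i ≤ k} V_{k,s_i}^− is one-dimensional, spanned by α₁ ∧ ⋯ ∧ α_k. -/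

import Mathlib

open Module ExteriorAlgebra

variable {F : Type*} [Field F] {V : Type*} [AddCommGroup V] [Module F V]
  {V₂ : Type*} [AddCommGroup V₂] [Module F V₂]

/-- A (generalized) reflection: a diagonalizable endomorphism `s` with
`rank (s - id) = 1`. -/
def IsReflection (s : V →ₗ[F] V) : Prop :=
  (⨆ μ : F, Module.End.eigenspace s μ) = ⊤ ∧
    Module.finrank F (LinearMap.range (s - LinearMap.id)) = 1

theorem extPower_map_mem (d : ℕ) (f : V →ₗ[F] V₂) {x : ExteriorAlgebra F V}
    (hx : x ∈ ⋀[F]^d V) : ExteriorAlgebra.map f x ∈ ⋀[F]^d V₂ := by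
  have h : Submodule.map (ExteriorAlgebra.map f).toLinearMap (⋀[F]^d V) ≤ ⋀[F]^d V₂ := by
    rw [exteriorPower, Submodule.map_pow, ι_range_map_map]
    have h1 : Submodule.map (ι F (M := V₂)) (LinearMap.range f)
        ≤ LinearMap.range (ι F (M := V₂)) := by
      rintro - ⟨y, -, rfl⟩
      exact ⟨y, rfl⟩
    exact pow_le_pow_left' h1 d
  exact h ⟨x, hx, rfl⟩

/-- The linear map induced on `d`-th exterior powers by a linear map; for the inclusion
`H.subtype` of a subspace `H ⊆ V` this realizes `⋀^d H` as a subspace of `⋀^d V`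
(via its range). -/
noncomputable def extMap (d : ℕ) (f : V →ₗ[F] V₂) : (⋀[F]^d V) →ₗ[F] (⋀[F]^d V₂) :=
  (ExteriorAlgebra.map f).toLinearMap.restrict (fun _ hx => extPower_map_mem d f hx)

@[simp] theorem extMap_apply_coe (d : ℕ) (f : V →ₗ[F] V₂) (x : ⋀[F]^d V) :
    (extMap d f x : ExteriorAlgebra F V₂) = ExteriorAlgebra.map f x := rfl

variable {W : Type*} [Group W]

/-- The representation of `W` on the `d`-th exterior power `⋀^d V` induced by a
representation of `W` on `V`, given by `w · (v₁ ∧ ⋯ ∧ v_d) = (w·v₁) ∧ ⋯ ∧ (w·v_d)`. -/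
noncomputable def extRep (ρ : Representation F W V) (d : ℕ) :
    Representation F W (⋀[F]^d V) where
  toFun w := extMap d (ρ w)
  map_one' := by
    apply LinearMap.ext
    intro x
    apply Subtype.ext
    simp only [extMap_apply_coe, map_one]
    show (ExteriorAlgebra.map (LinearMap.id) : _) _ = _
    rw [ExteriorAlgebra.map_id]
    rfl
  map_mul' a b := by
    apply LinearMap.ext
    intro x
    apply Subtype.ext
    simp only [extMap_apply_coe, map_mul]
    show (ExteriorAlgebra.map (ρ a ∘ₗ ρ b) : _) _ = _
    rw [← ExteriorAlgebra.map_comp_map]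
    rfl

/-- Irreducibility (simplicity) of a representation: the space is nonzero and the only
invariant subspaces are `⊥` and `⊤`. -/
def Representation.IsIrreducible' (ρ : Representation F W V) : Prop :=
  Nontrivial V ∧
    ∀ U : Submodule F V, (∀ w : W, ∀ v ∈ U, ρ w v ∈ U) → U = ⊥ ∨ U = ⊤

/-- Isomorphism of two representations of `W`: an equivariant linear equivalence. -/
def Representation.Iso {F W : Type*} [CommSemiring F] [Monoid W]
    {V₁ V₂ : Type*} [AddCommMonoid V₁] [Module F V₁] [AddCommMonoid V₂] [Module F V₂]
    (ρ₁ : Representation F W V₁) (ρ₂ : Representation F W V₂) : Prop :=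
  ∃ e : V₁ ≃ₗ[F] V₂, ∀ (w : W) (v : V₁), e (ρ₁ w v) = ρ₂ w (e v)

/-- The wedge product `v 0 ∧ v 1 ∧ ⋯ ∧ v (d-1)` as an element of `⋀^d V`. -/
noncomputable def wedge (d : ℕ) (v : Fin d → V) : ⋀[F]^d V :=
  ⟨ExteriorAlgebra.ιMulti F d v, ExteriorAlgebra.ιMulti_range F d ⟨v, rfl⟩⟩



section AuxLemmas

variable {N : Type*} [AddCommGroup N] [Module F N]

theorem alt_expand (d : ℕ) (f : V [⋀^Fin d]→ₗ[F] N) (α : V) (c : Fin d → F) :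
    ∀ v : Fin d → V, f (fun j => v j + c j • α) =
      f v + ∑ j, c j • f (Function.update v j α) := by
  classical
  suffices h : ∀ (S : Finset (Fin d)) (v : Fin d → V),
      f (S.piecewise (fun j => v j + c j • α) v) =
        f v + ∑ j ∈ S, c j • f (Function.update v j α) by
    intro v
    simpa using h Finset.univ v
  intro S
  induction S using Finset.induction with
  | empty => intro v; simp
  | @insert j₀ S hj₀ ih =>
    intro v
    rw [Finset.piecewise_insert]
    have h1 : S.piecewise (fun j => v j + c j • α) v j₀ = v j₀ :=
      Finset.piecewise_eq_of_notMem _ _ _ hj₀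
    have : Function.update (S.piecewise (fun j => v j + c j • α) v) j₀
        ((fun j => v j + c j • α) j₀) =
        Function.update (S.piecewise (fun j => v j + c j • α) v) j₀ (v j₀ + c j₀ • α) := rfl
    rw [this]
    rw [f.map_update_add, f.map_update_smul]
    have h2 : Function.update (S.piecewise (fun j => v j + c j • α) v) j₀ (v j₀) =
        S.piecewise (fun j => v j + c j • α) v := by
      rw [← h1, Function.update_eq_self]
    have h3 : Function.update (S.piecewise (fun j => v j + c j • α) v) j₀ α =
        S.piecewise (fun j => Function.update v j₀ α j + c j • α) (Function.update v j₀ α) := by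
      funext m
      by_cases hm : m = j₀
      · subst hm
        rw [Function.update_self, Finset.piecewise_eq_of_notMem _ _ _ hj₀,
          Function.update_self]
      · rw [Function.update_of_ne hm]
        by_cases hmS : m ∈ S
        · rw [Finset.piecewise_eq_of_mem _ _ _ hmS, Finset.piecewise_eq_of_mem _ _ _ hmS,
            Function.update_of_ne hm]
        · rw [Finset.piecewise_eq_of_notMem _ _ _ hmS,
            Finset.piecewise_eq_of_notMem _ _ _ hmS, Function.update_of_ne hm]
    rw [h2, h3, ih, ih (Function.update v j₀ α)]
    have h4 : ∀ j ∈ S, c j • f (Function.update (Function.update v j₀ α) j α) = 0 := by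
      intro j hj
      have hne : j₀ ≠ j := fun h => hj₀ (h ▸ hj)
      rw [f.map_eq_zero_of_eq _ (i := j₀) (j := j) ?_ hne, smul_zero]
      rw [Function.update_of_ne hne, Function.update_self, Function.update_self]
    rw [Finset.sum_congr rfl h4]
    rw [Finset.sum_insert hj₀]
    simp only [Finset.sum_const_zero, add_zero]
    abel

theorem alt_expand_eig (d : ℕ) (f : V [⋀^Fin d]→ₗ[F] N) (α : V) (c : Fin d → F)
    (v : Fin d → V) (j₀ : Fin d) (hv : v j₀ = α) :
    f (fun j => v j + c j • α) = (1 + c j₀) • f v := by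
  classical
  rw [alt_expand]
  rw [Finset.sum_eq_single j₀ ?h₀ (by simp)]
  · rw [← hv, Function.update_eq_self, add_smul, one_smul]
  case h₀ =>
    intro j _ hne
    rw [f.map_eq_zero_of_eq _ (i := j₀) (j := j) ?_ (fun h => hne h.symm), smul_zero]
    rw [Function.update_of_ne (fun h => hne h.symm), Function.update_self, hv]

theorem wedge_eq_zero {d : ℕ} {v : Fin d → V} {i j : Fin d} (h : v i = v j) (hij : i ≠ j) :
    wedge (F := F) d v = 0 := by
  apply Subtype.ext
  exact (ιMulti F d).map_eq_zero_of_eq v h hij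

noncomputable def awedge {n : ℕ} (a : Fin n → V) (d : ℕ)
    (T : {T : Finset (Fin n) // T.card = d}) : ⋀[F]^d V :=
  wedge d (fun i => a (T.1.orderEmbOfFin T.2 i))

theorem wedge_comp_injective {n d : ℕ} (a : Fin n → V) (g : Fin d → Fin n)
    (hg : Function.Injective g) :
    ∃ ε : F, wedge (F := F) d (a ∘ g) = ε • awedge a d
      ⟨Finset.image g Finset.univ,
        by rw [Finset.card_image_of_injective _ hg, Finset.card_univ, Fintype.card_fin]⟩ := by
  classical
  set T : Finset (Fin n) := Finset.image g Finset.univ with hT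
  have hTcard : T.card = d := by
    rw [hT, Finset.card_image_of_injective _ hg, Finset.card_univ, Fintype.card_fin]
  set σ' : Fin d → Fin d := fun m => (T.orderIsoOfFin hTcard).symm ⟨g m, by
    simp [hT, Finset.mem_image]⟩ with hσ'
  have hσinj : Function.Injective σ' := by
    intro x y hxy
    apply hg
    have h2 : (T.orderIsoOfFin hTcard (σ' x) : Fin n) = T.orderIsoOfFin hTcard (σ' y) := by
      rw [hxy]
    simpa [hσ', OrderIso.apply_symm_apply] using h2
  have hσbij : Function.Bijective σ' := (Finite.injective_iff_bijective).1 hσinj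
  let σ : Equiv.Perm (Fin d) := Equiv.ofBijective σ' hσbij
  have hcomp : a ∘ g = (fun i => a (T.orderEmbOfFin hTcard i)) ∘ σ := by
    funext m
    have : (T.orderEmbOfFin hTcard) (σ m) = g m := by
      show ((T.orderIsoOfFin hTcard) (σ' m) : Fin n) = g m
      rw [hσ', OrderIso.apply_symm_apply]
    simp [Function.comp, this]
  refine ⟨((Equiv.Perm.sign σ : ℤ) : F), ?_⟩
  apply Subtype.ext
  show ιMulti F d (a ∘ g) = _
  rw [hcomp, AlternatingMap.map_perm]
  show _ = ((Equiv.Perm.sign σ : ℤ) : F) • ιMulti F d _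
  rw [Int.cast_smul_eq_zsmul]
  rfl

theorem wedge_comp_mem_span {n d : ℕ} (a : Fin n → V) (g : Fin d → Fin n) :
    wedge (F := F) d (a ∘ g) ∈ Submodule.span F (Set.range (awedge (F := F) a d)) := by
  classical
  by_cases hg : Function.Injective g
  · obtain ⟨ε, hε⟩ := wedge_comp_injective (F := F) a g hg
    rw [hε]
    exact Submodule.smul_mem _ _ (Submodule.subset_span ⟨_, rfl⟩)
  · rw [Function.not_injective_iff] at hg
    obtain ⟨x, y, hxy, hne⟩ := hg
    rw [wedge_eq_zero (v := a ∘ g) (i := x) (j := y) (by simp [Function.comp, hxy]) hne]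
    exact Submodule.zero_mem _

theorem awedge_span_top {n d : ℕ} {a : Fin n → V} (hali : LinearIndependent F a)
    (haspan : Submodule.span F (Set.range a) = ⊤) :
    Submodule.span F (Set.range (awedge (F := F) a d)) = ⊤ := by
  classical
  let bV : Basis (Fin n) F V := Basis.mk hali (by rw [haspan])
  have hbV : ∀ i, bV i = a i := fun i => Basis.mk_apply hali _ i
  -- reduce to ambient statement
  apply Submodule.map_injective_of_injective (Submodule.injective_subtype (⋀[F]^d V))
  rw [Submodule.map_span, Submodule.map_subtype_top]
  have hset : (⋀[F]^d V).subtype '' Set.range (awedge (F := F) a d) =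
      Set.range (fun T => ((awedge (F := F) a d T : ExteriorAlgebra F V))) := by
    rw [← Set.range_comp]; rfl
  rw [hset]
  apply le_antisymm
  · rw [Submodule.span_le]
    rintro x ⟨T, rfl⟩
    exact (awedge (F := F) a d T).2
  · have hpow : (⋀[F]^d V : Submodule F _) = Submodule.span F (Set.range (ιMulti F d)) :=
      (ιMulti_span_fixedDegree F d).symm
    refine le_trans (le_of_eq hpow) (Submodule.span_le.2 ?_)
    rintro x ⟨v, rfl⟩
    have hv : v = fun j => ∑ i, bV.repr (v j) i • bV i := by
      funext j; rw [bV.sum_repr (v j)]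
    have hexp := MultilinearMap.map_sum ((ιMulti F d (M := V)).toMultilinearMap)
      (g := fun j i => bV.repr (v j) i • bV i)
    have : ιMulti F d v = ∑ r : Fin d → Fin n,
        (∏ j, bV.repr (v j) (r j)) • ιMulti F d (a ∘ r) := by
      conv_lhs => rw [hv]
      rw [show (ιMulti F d (M := V)) (fun j => ∑ i, bV.repr (v j) i • bV i) =
        ((ιMulti F d (M := V)).toMultilinearMap) (fun j => ∑ i, bV.repr (v j) i • bV i) from rfl]
      rw [hexp]
      apply Finset.sum_congr rfl
      intro r _
      rw [MultilinearMap.map_smul_univ]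
      congr 1
      show ιMulti F d _ = _
      congr 1
      funext j
      rw [hbV]
      rfl
    rw [this]
    apply Submodule.sum_mem
    intro r _
    apply Submodule.smul_mem
    have := wedge_comp_mem_span (F := F) a r
    have hmem := Submodule.mem_map_of_mem (f := (⋀[F]^d V).subtype) this
    rw [Submodule.map_span, hset] at hmem
    exact hmem

theorem awedge_linearIndependent {n d : ℕ} {a : Fin n → V} (hali : LinearIndependent F a)
    (haspan : Submodule.span F (Set.range a) = ⊤) :
    LinearIndependent F (awedge (F := F) a d) := by
  classical
  let bV : Basis (Fin n) F V := Basis.mk hali (by rw [haspan])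
  have hbV : ∀ i, bV i = a i := fun i => Basis.mk_apply hali _ i
  rw [Fintype.linearIndependent_iff]
  intro c hc T₀
  -- the coordinate functional given by a determinant
  let h : V →ₗ[F] (Fin d → F) := LinearMap.pi (fun j =>
    (Finsupp.lapply (T₀.1.orderEmbOfFin T₀.2 j)) ∘ₗ (bV.repr : V →ₗ[F] (Fin n →₀ F)))
  let detT : V [⋀^Fin d]→ₗ[F] F := (Matrix.detRowAlternating).compLinearMap h
  let Φ : ExteriorAlgebra F V →ₗ[F] F :=
    liftAlternating (Function.update (0 : ∀ i, V [⋀^Fin i]→ₗ[F] F) d detT)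
  have hdet : ∀ T : {T : Finset (Fin n) // T.card = d},
      detT (fun i => a (T.1.orderEmbOfFin T.2 i)) = if T = T₀ then 1 else 0 := by
    intro T
    have hM : ∀ i j, h (a (T.1.orderEmbOfFin T.2 i)) j =
        if (T.1.orderEmbOfFin T.2 i : Fin n) = T₀.1.orderEmbOfFin T₀.2 j then 1 else 0 := by
      intro i j
      show bV.repr (a (T.1.orderEmbOfFin T.2 i)) (T₀.1.orderEmbOfFin T₀.2 j) = _
      rw [← hbV, bV.repr_self, Finsupp.single_apply]
    show Matrix.det (fun i j => h (a (T.1.orderEmbOfFin T.2 i)) j) = _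
    by_cases hT : T = T₀
    · subst hT
      rw [if_pos rfl]
      have : (fun i j => h (a (T.1.orderEmbOfFin T.2 i)) j) = (1 : Matrix (Fin d) (Fin d) F) := by
        funext i j
        rw [hM, Matrix.one_apply]
        congr 1
        simp only [eq_iff_iff]
        constructor
        · intro hx; exact (T.1.orderEmbOfFin T.2).injective hx
        · intro hx; rw [hx]
      rw [this, Matrix.det_one]
    · rw [if_neg hT]
      have hnsub : ¬ T.1 ⊆ T₀.1 := by
        intro hsub
        exact hT (Subtype.ext (Finset.eq_of_subset_of_card_le hsub (by rw [T.2, T₀.2])))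
      obtain ⟨x, hxT, hxT₀⟩ := Set.not_subset.1 (fun h' => hnsub (fun y hy => h' hy))
      have hxr : x ∈ Set.range (T.1.orderEmbOfFin T.2) := by
        rw [Finset.range_orderEmbOfFin]; exact hxT
      obtain ⟨i₀, hi₀⟩ := hxr
      apply Matrix.det_eq_zero_of_row_eq_zero i₀
      intro j
      rw [hM, if_neg]
      rw [hi₀]
      intro hcontra
      exact hxT₀ (hcontra ▸ Finset.orderEmbOfFin_mem T₀.1 T₀.2 j)
  -- push the relation into the exterior algebra and apply Φ
  have hc' : ∑ T, c T • (ιMulti F d (fun i => a (T.1.orderEmbOfFin T.2 i))) = 0 := by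
    have := congrArg (Subtype.val : (⋀[F]^d V) → ExteriorAlgebra F V) hc
    simpa [awedge, wedge] using this
  have := congrArg Φ hc'
  rw [map_sum, map_zero] at this
  simp only [map_smul] at this
  have hΦ : ∀ T : {T : Finset (Fin n) // T.card = d},
      Φ (ιMulti F d (fun i => a (T.1.orderEmbOfFin T.2 i))) = if T = T₀ then 1 else 0 := by
    intro T
    show liftAlternating _ _ = _
    rw [liftAlternating_apply_ιMulti, Function.update_self]
    exact hdet T
  rw [Finset.sum_congr rfl (fun T _ => by rw [hΦ T])] at this
  simpa using this

theorem eigenspace_eq_span {M : Type*} [AddCommGroup M] [Module F M] (g : Module.End F M)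
    {ι : Type*} (b : Basis ι F M) (P : Set ι) {lam : F} (hlam : lam ≠ 1)
    (h1 : ∀ i ∈ P, g (b i) = lam • b i)
    (h2 : ∀ i ∉ P, g (b i) - b i ∈ Submodule.span F (b '' P)) :
    Module.End.eigenspace g lam = Submodule.span F (b '' P) := by
  classical
  apply le_antisymm
  · intro x hx
    rw [Module.End.mem_eigenspace_iff] at hx
    have hall : ∀ y : M, g y - y ∈ Submodule.span F (b '' P) := by
      have htop : Submodule.comap (g - LinearMap.id) (Submodule.span F (b '' P)) = ⊤ := by
        rw [eq_top_iff, ← b.span_eq, Submodule.span_le]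
        rintro y ⟨i, rfl⟩
        simp only [SetLike.mem_coe, Submodule.mem_comap, LinearMap.sub_apply, LinearMap.id_apply]
        by_cases hi : i ∈ P
        · rw [h1 i hi, show lam • b i - b i = (lam - 1) • b i by rw [sub_smul, one_smul]]
          exact Submodule.smul_mem _ _ (Submodule.subset_span ⟨i, hi, rfl⟩)
        · exact h2 i hi
      intro y
      have : y ∈ Submodule.comap (g - LinearMap.id) (Submodule.span F (b '' P)) := by
        rw [htop]; trivial
      simpa using this
    have hx2 : (lam - 1) • x ∈ Submodule.span F (b '' P) := by
      have h := hall x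
      rw [hx] at h
      rwa [sub_smul, one_smul]
    have := Submodule.smul_mem _ (lam - 1)⁻¹ hx2
    rwa [smul_smul, inv_mul_cancel₀ (sub_ne_zero.2 hlam), one_smul] at this
  · rw [Submodule.span_le]
    rintro y ⟨i, hi, rfl⟩
    rw [SetLike.mem_coe, Module.End.mem_eigenspace_iff]
    exact h1 i hi

theorem iInf_span_image_eq {M ι κ : Type*} [AddCommGroup M] [Module F M]
    (b : Basis ι F M) (P : κ → Set ι) :
    (⨅ j, Submodule.span F (b '' P j)) = Submodule.span F (b '' ⋂ j, P j) := by
  ext x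
  simp only [Submodule.mem_iInf, Basis.mem_span_image, Set.subset_iInter_iff]

theorem extRep_wedge (ρ : Representation F W V) (d : ℕ) (w : W) (v : Fin d → V) :
    (extRep ρ d) w (wedge (F := F) d v) = wedge d (fun j => ρ w (v j)) := by
  apply Subtype.ext
  show ((extMap d (ρ w)) (wedge (F := F) d v) : ExteriorAlgebra F V) = _
  rw [extMap_apply_coe]
  show ExteriorAlgebra.map (ρ w) (ιMulti F d v) = ιMulti F d fun j => ρ w (v j)
  rw [map_apply_ιMulti]
  rfl


end AuxLemmas

/-- Let `ρ : W → GL(V)` be an `n`-dimensional representation and let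
`s 1, …, s k ∈ W` act on `V` as generalized reflections with linearly independent
reflection vectors `α i` of eigenvalues `lam i`; extend the `α i` to a basis
`a : Fin n → V` of `V` (with `a i = α i` for `i < k`). Then for every `k ≤ d ≤ n` the
wedges `α 1 ∧ ⋯ ∧ α k ∧ a j_{k+1} ∧ ⋯ ∧ a j_d` (for `k ≤ j_{k+1} < ⋯ < j_d < n`) form a
basis of `⋂_{1 ≤ i ≤ k} V_{d, s i}^-`; in particular for `d = k` this intersection is
one-dimensional, spanned by `α 1 ∧ ⋯ ∧ α k`. -/
theorem iInf_eigenspace_basis_of_le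
    [FiniteDimensional F V] (ρ : Representation F W V)
    {n : ℕ} (hn : Module.finrank F V = n)
    {k : ℕ} (s : Fin k → W) (α : Fin k → V) (lam : Fin k → F)
    (hrefl : ∀ i, IsReflection (ρ (s i)))
    (hα : ∀ i, α i ≠ 0)
    (hαmem : ∀ i, α i ∈ LinearMap.range (ρ (s i) - LinearMap.id))
    (heig : ∀ i, ρ (s i) (α i) = lam i • α i)
    (hlam : ∀ i, lam i ≠ 1)
    (hli : LinearIndependent F α)
    (hkn : k ≤ n) (a : Fin n → V) (hali : LinearIndependent F a)
    (haspan : Submodule.span F (Set.range a) = ⊤)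
    (ha : ∀ i : Fin k, a (Fin.castLE hkn i) = α i) :
    (∀ d : ℕ, k ≤ d → d ≤ n →
      LinearIndependent F
        (fun t : {t : Finset (Fin n) // (∀ j ∈ t, k ≤ (j : ℕ)) ∧ t.card + k = d} =>
          wedge (F := F) d (fun i => if h : (i : ℕ) < k then α ⟨(i : ℕ), h⟩
            else a ↑(t.1.orderIsoOfFin rfl
              ⟨(i : ℕ) - k, by have h1 := i.isLt; have h2 := t.2.2; omega⟩))) ∧
      Submodule.span F (Set.range
          (fun t : {t : Finset (Fin n) // (∀ j ∈ t, k ≤ (j : ℕ)) ∧ t.card + k = d} =>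
            wedge (F := F) d (fun i => if h : (i : ℕ) < k then α ⟨(i : ℕ), h⟩
              else a ↑(t.1.orderIsoOfFin rfl
                ⟨(i : ℕ) - k, by have h1 := i.isLt; have h2 := t.2.2; omega⟩)))) =
        ⨅ i : Fin k, Module.End.eigenspace ((extRep ρ d) (s i)) (lam i)) ∧
    (⨅ i : Fin k, Module.End.eigenspace ((extRep ρ k) (s i)) (lam i)) =
      Submodule.span F {wedge (F := F) k α} ∧
    Module.finrank F
      (⨅ i : Fin k, Module.End.eigenspace ((extRep ρ k) (s i)) (lam i) : Submodule F _) = 1 := by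
  classical
  -- reflection coefficients
  have hc0 : ∀ (i : Fin k) (j : Fin n), ∃ cc : F, ρ (s i) (a j) = a j + cc • α i := by
    intro i j
    have hr : LinearMap.range (ρ (s i) - LinearMap.id) = Submodule.span F {α i} := by
      refine (Submodule.eq_of_le_of_finrank_le ?_ ?_).symm
      · rw [Submodule.span_singleton_le_iff_mem]; exact hαmem i
      · rw [(hrefl i).2, finrank_span_singleton (hα i)]
    have hmem : (ρ (s i) - LinearMap.id : V →ₗ[F] V) (a j) ∈
        LinearMap.range (ρ (s i) - LinearMap.id) := ⟨_, rfl⟩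
    rw [hr, Submodule.mem_span_singleton] at hmem
    obtain ⟨cc, hcc⟩ := hmem
    refine ⟨cc, ?_⟩
    have : ρ (s i) (a j) - a j = cc • α i := by
      rw [hcc]; simp [LinearMap.sub_apply]
    rw [← this]; abel
  choose c hc using hc0
  have hcι : ∀ i : Fin k, (1 : F) + c i (Fin.castLE hkn i) = lam i := by
    intro i
    have h1 := hc i (Fin.castLE hkn i)
    rw [ha i, heig i] at h1
    have h2 : (lam i - (1 + c i (Fin.castLE hkn i))) • α i = 0 := by
      rw [sub_smul, add_smul, one_smul, h1]; abel
    rcases smul_eq_zero.1 h2 with h | h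
    · exact (eq_of_sub_eq_zero h).symm
    · exact absurd h (hα i)
  -- the main construction, for each degree d
  have key : ∀ d : ℕ, k ≤ d → d ≤ n →
      LinearIndependent F
        (fun t : {t : Finset (Fin n) // (∀ j ∈ t, k ≤ (j : ℕ)) ∧ t.card + k = d} =>
          wedge (F := F) d (fun i => if h : (i : ℕ) < k then α ⟨(i : ℕ), h⟩
            else a ↑(t.1.orderIsoOfFin rfl
              ⟨(i : ℕ) - k, by have h1 := i.isLt; have h2 := t.2.2; omega⟩))) ∧
      Submodule.span F (Set.range
          (fun t : {t : Finset (Fin n) // (∀ j ∈ t, k ≤ (j : ℕ)) ∧ t.card + k = d} =>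
            wedge (F := F) d (fun i => if h : (i : ℕ) < k then α ⟨(i : ℕ), h⟩
              else a ↑(t.1.orderIsoOfFin rfl
                ⟨(i : ℕ) - k, by have h1 := i.isLt; have h2 := t.2.2; omega⟩)))) =
        ⨅ i : Fin k, Module.End.eigenspace ((extRep ρ d) (s i)) (lam i) := by
    intro d hkd hdn
    set E := awedge (F := F) a d with hE
    have hLIE : LinearIndependent F E := awedge_linearIndependent hali haspan
    have hspanE : Submodule.span F (Set.range E) = ⊤ := awedge_span_top hali haspan
    let Bd : Basis {T : Finset (Fin n) // T.card = d} F (⋀[F]^d V) :=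
      Basis.mk hLIE (by rw [hspanE])
    have hBco : ⇑Bd = E := Basis.coe_mk _ _
    -- action of reflections on basis wedges
    have hact : ∀ (i : Fin k) (T : {T : Finset (Fin n) // T.card = d}),
        ((extRep ρ d) (s i)) (E T) = wedge d (fun m =>
          a (T.1.orderEmbOfFin T.2 m) + (c i (T.1.orderEmbOfFin T.2 m)) • α i) := by
      intro i T
      rw [hE]
      show (extRep ρ d) (s i) (wedge d _) = _
      rw [extRep_wedge]
      congr 1
      funext m
      exact hc i _
    have hactIn : ∀ (i : Fin k) (T : {T : Finset (Fin n) // T.card = d}),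
        Fin.castLE hkn i ∈ T.1 → ((extRep ρ d) (s i)) (E T) = lam i • E T := by
      intro i T hmem
      rw [hact]
      obtain ⟨j₀, hj₀⟩ : ∃ j₀, T.1.orderEmbOfFin T.2 j₀ = Fin.castLE hkn i := by
        have : (Fin.castLE hkn i : Fin n) ∈ Set.range (T.1.orderEmbOfFin T.2) := by
          rw [Finset.range_orderEmbOfFin]; exact hmem
        exact this
      apply Subtype.ext
      show ιMulti F d _ = ((lam i • E T : ⋀[F]^d V) : ExteriorAlgebra F V)
      rw [alt_expand_eig d (ιMulti F d) (α i) (fun m => c i (T.1.orderEmbOfFin T.2 m))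
        (fun m => a (T.1.orderEmbOfFin T.2 m)) j₀
        (by show a (T.1.orderEmbOfFin T.2 j₀) = α i; rw [hj₀]; exact ha i)]
      rw [hj₀, hcι i]
      simp only [SetLike.val_smul]
      rfl
    have hactOut : ∀ (i : Fin k) (T : {T : Finset (Fin n) // T.card = d}),
        Fin.castLE hkn i ∉ T.1 →
        ((extRep ρ d) (s i)) (E T) - E T ∈
          Submodule.span F (E '' {T | Fin.castLE hkn i ∈ T.1}) := by
      intro i T hmem
      rw [hact]
      have hsub : wedge (F := F) d (fun m =>
          a (T.1.orderEmbOfFin T.2 m) + (c i (T.1.orderEmbOfFin T.2 m)) • α i)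
          = E T + ∑ j, (c i (T.1.orderEmbOfFin T.2 j)) •
              wedge d (Function.update (fun m => a (T.1.orderEmbOfFin T.2 m)) j (α i)) := by
        apply Subtype.ext
        push_cast [AddSubmonoidClass.coe_finset_sum, SetLike.val_smul]
        exact alt_expand d (ιMulti F d) (α i) _ _
      rw [hsub, add_sub_cancel_left]
      apply Submodule.sum_mem
      intro j _
      apply Submodule.smul_mem
      set g : Fin d → Fin n :=
        Function.update (fun m => T.1.orderEmbOfFin T.2 m) j (Fin.castLE hkn i) with hg
      have hgj : g j = Fin.castLE hkn i := Function.update_self _ _ _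
      have hgm : ∀ m, m ≠ j → g m = T.1.orderEmbOfFin T.2 m := fun m hm =>
        Function.update_of_ne hm _ _
      have hupdate : Function.update (fun m => a (T.1.orderEmbOfFin T.2 m)) j (α i) = a ∘ g := by
        funext m
        by_cases hm : m = j
        · subst hm
          rw [Function.update_self]
          show α i = a (g m)
          rw [hgj, ha i]
        · rw [Function.update_of_ne hm]
          show a _ = a (g m)
          rw [hgm m hm]
      have hginj : Function.Injective g := by
        intro x y hxy
        by_cases hx : x = j <;> by_cases hy : y = j
        · rw [hx, hy]
        · rw [hx, hgj, hgm y hy] at hxy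
          exact absurd (hxy ▸ Finset.orderEmbOfFin_mem T.1 T.2 y) hmem
        · rw [hy, hgj, hgm x hx] at hxy
          exact absurd (hxy.symm ▸ Finset.orderEmbOfFin_mem T.1 T.2 x) hmem
        · rw [hgm x hx, hgm y hy] at hxy
          exact (T.1.orderEmbOfFin T.2).injective hxy
      rw [hupdate]
      obtain ⟨ε, hε⟩ := wedge_comp_injective (F := F) a g hginj
      rw [hε]
      apply Submodule.smul_mem
      apply Submodule.subset_span
      refine ⟨⟨Finset.image g Finset.univ, _⟩, ?_, rfl⟩
      show Fin.castLE hkn i ∈ Finset.image g Finset.univ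
      exact Finset.mem_image.2 ⟨j, Finset.mem_univ j, hgj⟩
    -- eigenspaces are coordinate subspaces
    have heigsp : ∀ i : Fin k, Module.End.eigenspace ((extRep ρ d) (s i)) (lam i)
        = Submodule.span F (E '' {T | Fin.castLE hkn i ∈ T.1}) := by
      intro i
      have h := eigenspace_eq_span ((extRep ρ d) (s i)) Bd {T | Fin.castLE hkn i ∈ T.1}
        (hlam i) ?_ ?_
      · rwa [hBco] at h
      · intro T hT
        rw [hBco]
        exact hactIn i T hT
      · intro T hT
        rw [hBco]
        exact hactOut i T hT
    have hiInf : (⨅ i : Fin k, Module.End.eigenspace ((extRep ρ d) (s i)) (lam i))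
        = Submodule.span F (E '' ⋂ i : Fin k, {T | Fin.castLE hkn i ∈ T.1}) := by
      rw [iInf_congr heigsp, ← hBco, iInf_span_image_eq]
    -- reindexing
    set K : Finset (Fin n) := Finset.image (Fin.castLE hkn) Finset.univ with hK
    have hKcard : K.card = k := by
      rw [hK, Finset.card_image_of_injective _ (Fin.castLE_injective hkn),
        Finset.card_univ, Fintype.card_fin]
    have hKmem : ∀ x : Fin n, x ∈ K ↔ (x : ℕ) < k := by
      intro x
      rw [hK, Finset.mem_image]
      constructor
      · rintro ⟨y, -, rfl⟩; exact y.isLt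
      · intro hx; exact ⟨⟨x, hx⟩, Finset.mem_univ _, by ext; rfl⟩
    have hdisj : ∀ t : {t : Finset (Fin n) // (∀ j ∈ t, k ≤ (j : ℕ)) ∧ t.card + k = d},
        Disjoint t.1 K := by
      intro t
      rw [Finset.disjoint_left]
      intro x hx hxK
      have := t.2.1 x hx
      have := (hKmem x).1 hxK
      omega
    set e : {t : Finset (Fin n) // (∀ j ∈ t, k ≤ (j : ℕ)) ∧ t.card + k = d} →
        {T : Finset (Fin n) // T.card = d} := fun t =>
      ⟨t.1 ∪ K, by rw [Finset.card_union_of_disjoint (hdisj t), hKcard, t.2.2]⟩ with he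
    have heinj : Function.Injective e := by
      intro t₁ t₂ h12
      have h := congrArg (fun T : {T : Finset (Fin n) // T.card = d} => T.1 \ K) h12
      simp only [he] at h
      rwa [Finset.union_sdiff_cancel_right (hdisj t₁),
        Finset.union_sdiff_cancel_right (hdisj t₂), ← Subtype.ext_iff] at h
    -- the statement's wedges coincide with basis wedges
    have hGE : ∀ t : {t : Finset (Fin n) // (∀ j ∈ t, k ≤ (j : ℕ)) ∧ t.card + k = d},
        wedge (F := F) d (fun i => if h : (i : ℕ) < k then α ⟨(i : ℕ), h⟩
            else a ↑(t.1.orderIsoOfFin rfl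
              ⟨(i : ℕ) - k, by have h1 := i.isLt; have h2 := t.2.2; omega⟩)) = E (e t) := by
      intro t
      set f : Fin d → Fin n := fun m => if h : (m : ℕ) < k then Fin.castLE hkn ⟨(m : ℕ), h⟩
        else t.1.orderEmbOfFin rfl ⟨(m : ℕ) - k, by have h1 := m.isLt; have h2 := t.2.2; omega⟩
        with hf
      have hfs : ∀ m, f m ∈ (e t).1 := by
        intro m
        rw [hf]
        by_cases hm : (m : ℕ) < k
        · simp only [dif_pos hm]
          exact Finset.mem_union_right _ ((hKmem _).2 (by simpa using hm))
        · simp only [dif_neg hm]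
          exact Finset.mem_union_left _ (Finset.orderEmbOfFin_mem _ _ _)
      have hmono : StrictMono f := by
        intro m₁ m₂ hlt
        rw [hf]
        by_cases h1 : (m₁ : ℕ) < k <;> by_cases h2 : (m₂ : ℕ) < k
        · simp only [dif_pos h1, dif_pos h2]
          have := Fin.lt_def.1 hlt
          rw [Fin.lt_def]
          simp only [Fin.coe_castLE]
          exact this
        · simp only [dif_pos h1, dif_neg h2]
          have hmem := Finset.orderEmbOfFin_mem t.1 rfl
            ⟨(m₂ : ℕ) - k, by have := m₂.isLt; have := t.2.2; omega⟩
          have := t.2.1 _ (hmem)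
          rw [Fin.lt_def]
          simp only [Fin.coe_castLE]
          omega
        · exfalso
          have := Fin.lt_def.1 hlt
          omega
        · simp only [dif_neg h1, dif_neg h2]
          apply (t.1.orderEmbOfFin rfl).strictMono
          rw [Fin.lt_def]
          have := Fin.lt_def.1 hlt
          simp only
          omega
      have hfeq : f = (e t).1.orderEmbOfFin (e t).2 := Finset.orderEmbOfFin_unique (e t).2 hfs hmono
      show wedge (F := F) d _ = wedge (F := F) d _
      congr 1
      funext m
      rw [← hfeq, hf]
      by_cases hm : (m : ℕ) < k
      · simp only [dif_pos hm]
        rw [ha ⟨(m : ℕ), hm⟩]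
      · simp only [dif_neg hm]
        rfl
    have hrangee : Set.range e = {T : {T : Finset (Fin n) // T.card = d} |
        ∀ i : Fin k, Fin.castLE hkn i ∈ T.1} := by
      apply Set.ext
      intro T
      constructor
      · rintro ⟨t, rfl⟩
        intro i
        exact Finset.mem_union_right _ ((hKmem _).2 (by simpa using i.isLt))
      · intro hT
        have hKsub : K ⊆ T.1 := by
          intro x hx
          obtain ⟨y, -, rfl⟩ := Finset.mem_image.1 (by rwa [← hK])
          exact hT y
        set t : Finset (Fin n) := T.1.filter (fun j => k ≤ (j : ℕ)) with ht
        have htu : t ∪ K = T.1 := by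
          apply Finset.Subset.antisymm
          · apply Finset.union_subset
            · rw [ht]; exact Finset.filter_subset _ _
            · exact hKsub
          · intro x hx
            by_cases hxk : k ≤ (x : ℕ)
            · exact Finset.mem_union_left _ (by rw [ht]; exact Finset.mem_filter.2 ⟨hx, hxk⟩)
            · exact Finset.mem_union_right _ ((hKmem x).2 (by omega))
        have htprop : ∀ j ∈ t, k ≤ (j : ℕ) := by
          intro j hj; rw [ht] at hj; exact (Finset.mem_filter.1 hj).2
        have htdisj : Disjoint t K := by
          rw [Finset.disjoint_left]
          intro x hx hxK
          have := htprop x hx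
          have := (hKmem x).1 hxK
          omega
        have htcard : t.card + k = d := by
          have := Finset.card_union_of_disjoint htdisj
          rw [htu, T.2, hKcard] at this
          omega
        exact ⟨⟨t, htprop, htcard⟩, Subtype.ext htu⟩
    have hiInter : (⋂ i : Fin k, {T : {T : Finset (Fin n) // T.card = d} |
        Fin.castLE hkn i ∈ T.1}) = Set.range e := by
      rw [hrangee]
      ext T
      simp only [Set.mem_iInter, Set.mem_setOf_eq]
    constructor
    · have hcomp : (fun t : {t : Finset (Fin n) // (∀ j ∈ t, k ≤ (j : ℕ)) ∧ t.card + k = d} =>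
          wedge (F := F) d (fun i => if h : (i : ℕ) < k then α ⟨(i : ℕ), h⟩
            else a ↑(t.1.orderIsoOfFin rfl
              ⟨(i : ℕ) - k, by have h1 := i.isLt; have h2 := t.2.2; omega⟩))) = E ∘ e :=
        funext hGE
      rw [hcomp]
      exact hLIE.comp e heinj
    · have hcomp : (fun t : {t : Finset (Fin n) // (∀ j ∈ t, k ≤ (j : ℕ)) ∧ t.card + k = d} =>
          wedge (F := F) d (fun i => if h : (i : ℕ) < k then α ⟨(i : ℕ), h⟩
            else a ↑(t.1.orderIsoOfFin rfl
              ⟨(i : ℕ) - k, by have h1 := i.isLt; have h2 := t.2.2; omega⟩))) = E ∘ e :=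
        funext hGE
      rw [hcomp, Set.range_comp, hrangee, hiInf, hiInter, hrangee]
  have hU : Unique {t : Finset (Fin n) // (∀ j ∈ t, k ≤ (j : ℕ)) ∧ t.card + k = k} :=
    { default := ⟨∅, fun j hj => absurd hj (Finset.notMem_empty j), by simp⟩,
      uniq := fun t => Subtype.ext (by
        have := t.2.2
        exact Finset.card_eq_zero.1 (by omega)) }
  obtain ⟨hLIk, hspank⟩ := key k le_rfl hkn
  have hdefault : wedge (F := F) k (fun i : Fin k => if h : (i : ℕ) < k then α ⟨(i : ℕ), h⟩
      else a ↑(((hU.default : {t : Finset (Fin n) // (∀ j ∈ t, k ≤ (j : ℕ)) ∧ t.card + k = k}).1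
        ).orderIsoOfFin rfl
        ⟨(i : ℕ) - k, by have h1 := i.isLt; have h2 := hU.default.2.2; omega⟩)) =
      wedge (F := F) k α := by
    congr 1
    funext i
    rw [dif_pos i.isLt]
  have hrange : Set.range
      (fun t : {t : Finset (Fin n) // (∀ j ∈ t, k ≤ (j : ℕ)) ∧ t.card + k = k} =>
        wedge (F := F) k (fun i => if h : (i : ℕ) < k then α ⟨(i : ℕ), h⟩
          else a ↑(t.1.orderIsoOfFin rfl
            ⟨(i : ℕ) - k, by have h1 := i.isLt; have h2 := t.2.2; omega⟩))) =
      {wedge (F := F) k α} := by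
    rw [@Set.range_unique _ _ _ hU, hdefault]
  have heq : (⨅ i : Fin k, Module.End.eigenspace ((extRep ρ k) (s i)) (lam i)) =
      Submodule.span F {wedge (F := F) k α} := by
    rw [← hspank, hrange]
  refine ⟨key, heq, ?_⟩
  rw [heq]
  have hne : wedge (F := F) k α ≠ 0 := by
    have := hLIk.ne_zero hU.default
    rwa [hdefault] at this
  exact finrank_span_singleton hne
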